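/- Let K ⊆ P(ℝ) be a nonempty set which is bounded above with respect to ≤st and directed upwards (for all μ, ν ∈ K there exists κ ∈ K with μ ≤st κ and ν ≤st κ). Then the least upper bound σ of K with respect to ≤st exists, and there is a sequence (μⁿ)_{n∈ℕ} ⊆ K with μⁿ ≤st μⁿ⁺¹ for all n such that μⁿ → σ weakly as n → ∞. -/

import Mathlib

open MeasureTheory Filter Set Topology

/-- First order stochastic dominance on `P(ℝ)`. -/
def StOrd (μ ν : ProbabilityMeasure ℝ) : Prop :=
  ∀ s : ℝ, (μ : Measure ℝ) (Ioi s) ≤ (ν : Measure ℝ) (Ioi s)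

open scoped NNReal ENNReal

private lemma toReal_union_eq {μ : Measure ℝ} [IsFiniteMeasure μ] {A B : Set ℝ}
    (hB : MeasurableSet B) :
    (μ (A ∪ B)).toReal = (μ A).toReal + (μ B).toReal - (μ (A ∩ B)).toReal := by
  have h := measure_union_add_inter (μ := μ) A hB
  have h1 : (μ (A ∪ B)).toReal + (μ (A ∩ B)).toReal = (μ A).toReal + (μ B).toReal := by
    rw [← ENNReal.toReal_add (measure_ne_top μ _) (measure_ne_top μ _),
        ← ENNReal.toReal_add (measure_ne_top μ _) (measure_ne_top μ _), h]
  linarith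

private lemma conv_biUnion_Ioc {σ : Measure ℝ} {μs : ℕ → Measure ℝ} [IsFiniteMeasure σ]
    [∀ n, IsFiniteMeasure (μs n)]
    (h : ∀ a b : ℝ, Tendsto (fun n => (μs n (Ioc a b)).toReal) atTop
      (𝓝 ((σ (Ioc a b)).toReal))) :
    ∀ (m : ℕ) {ι : Type} [DecidableEq ι] (f g : ι → ℝ) (s : Finset ι), s.card ≤ m →
      Tendsto (fun n => (μs n (⋃ i ∈ s, Ioc (f i) (g i))).toReal) atTop
        (𝓝 ((σ (⋃ i ∈ s, Ioc (f i) (g i))).toReal)) := by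
  intro m
  induction m with
  | zero =>
    intro ι _ f g s hs
    rw [Finset.card_eq_zero.mp (Nat.le_zero.mp hs)]
    simp
  | succ m ih =>
    intro ι _ f g s hs
    rcases Nat.lt_or_ge s.card (m + 1) with h' | h'
    · exact ih f g s (Nat.lt_succ_iff.mp h')
    · have hcard : s.card = m + 1 := le_antisymm hs h'
      obtain ⟨a, t, hat, rfl, htcard⟩ := Finset.card_eq_succ.mp hcard
      have hAB : (⋃ i ∈ insert a t, Ioc (f i) (g i))
          = Ioc (f a) (g a) ∪ ⋃ i ∈ t, Ioc (f i) (g i) := by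
        simp [Finset.set_biUnion_insert]
      have hinter : Ioc (f a) (g a) ∩ ⋃ i ∈ t, Ioc (f i) (g i)
          = ⋃ i ∈ t, Ioc (max (f a) (f i)) (min (g a) (g i)) := by
        rw [inter_iUnion₂]
        exact iUnion₂_congr fun i _ => Ioc_inter_Ioc
      have hBmeas : MeasurableSet (⋃ i ∈ t, Ioc (f i) (g i)) :=
        MeasurableSet.biUnion t.countable_toSet (fun i _ => measurableSet_Ioc)
      have hgoal : ∀ (ν : Measure ℝ) (_ : IsFiniteMeasure ν),
          (ν (⋃ i ∈ insert a t, Ioc (f i) (g i))).toReal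
          = (ν (Ioc (f a) (g a))).toReal + (ν (⋃ i ∈ t, Ioc (f i) (g i))).toReal
            - (ν (⋃ i ∈ t, Ioc (max (f a) (f i)) (min (g a) (g i)))).toReal := by
        intro ν hν
        rw [hAB, ← hinter]
        exact toReal_union_eq hBmeas
      have key := ((h (f a) (g a)).add (ih f g t htcard.le)).sub
        (ih (fun i => max (f a) (f i)) (fun i => min (g a) (g i)) t htcard.le)
      rw [hgoal σ inferInstance]
      exact key.congr fun n => (hgoal (μs n) inferInstance).symm

private lemma open_le_liminf {σ : ProbabilityMeasure ℝ} {μs : ℕ → ProbabilityMeasure ℝ}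
    (h : ∀ a b : ℝ, Tendsto (fun n => ((μs n : Measure ℝ) (Ioc a b)).toReal) atTop
      (𝓝 (((σ : Measure ℝ) (Ioc a b)).toReal)))
    {U : Set ℝ} (hU : IsOpen U) : σ U ≤ atTop.liminf (fun n => μs n U) := by
  apply le_of_forall_lt
  intro c hc
  -- pick c' strictly between
  obtain ⟨c', hcc', hc'⟩ := exists_between hc
  suffices hsuff : (c' : ℝ≥0) ≤ atTop.liminf (fun n => μs n U) by exact lt_of_lt_of_le hcc' hsuff
  -- move to ENNReal
  have hcU : (c' : ℝ≥0∞) < (σ : Measure ℝ) U := by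
    rw [← ProbabilityMeasure.ennreal_coeFn_eq_coeFn_toMeasure]
    exact_mod_cast hc'
  have hUfin : (σ : Measure ℝ) U ≠ ∞ := measure_ne_top _ _
  -- compact inner approximation
  obtain ⟨Kc, hKcU, hKc, hKclt⟩ := hU.measurableSet.exists_isCompact_lt_add hUfin
    (ε := (σ : Measure ℝ) U - c') (by simpa [tsub_eq_zero_iff_le] using not_le.mpr hcU)
  have hcK : (c' : ℝ≥0∞) < (σ : Measure ℝ) Kc := by
    by_contra hcon
    push_neg at hcon
    have : (σ : Measure ℝ) Kc + ((σ : Measure ℝ) U - c') ≤ (σ : Measure ℝ) U := by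
      calc (σ : Measure ℝ) Kc + ((σ : Measure ℝ) U - c')
          ≤ (c' : ℝ≥0∞) + ((σ : Measure ℝ) U - c') := add_le_add_left hcon _
        _ = (σ : Measure ℝ) U := by rw [add_comm]; exact tsub_add_cancel_of_le hcU.le
    exact absurd hKclt (not_lt.mpr this)
  -- rational interval cover of Kc
  set ι := {p : ℚ × ℚ // Ioo (p.1 : ℝ) (p.2 : ℝ) ⊆ U} with hι
  have hcover : Kc ⊆ ⋃ i : ι, Ioo ((i.1.1 : ℝ)) ((i.1.2 : ℝ)) := by
    intro x hx
    obtain ⟨ε, hε, hball⟩ := Metric.isOpen_iff.mp hU x (hKcU hx)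
    obtain ⟨q, hq1, hq2⟩ := exists_rat_btwn (show x - ε < x by linarith)
    obtain ⟨r, hr1, hr2⟩ := exists_rat_btwn (show x < x + ε by linarith)
    have hsub : Ioo ((q : ℝ)) ((r : ℝ)) ⊆ U := by
      intro y hy
      apply hball
      rw [Real.ball_eq_Ioo]
      exact ⟨by linarith [hy.1], by linarith [hy.2]⟩
    exact mem_iUnion.mpr ⟨⟨(q, r), hsub⟩, ⟨hq2, hr1⟩⟩
  obtain ⟨t, ht⟩ := hKc.elim_finite_subcover (fun i : ι => Ioo ((i.1.1 : ℝ)) ((i.1.2 : ℝ)))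
    (fun _ => isOpen_Ioo) hcover
  -- shrink open intervals to Ioc
  set W : ℕ → Set ℝ := fun m => ⋃ i ∈ t, Ioc ((i.1.1 : ℝ)) ((i.1.2 : ℝ) - 1 / (m + 1)) with hW
  have hWmono : Monotone W := by
    intro m m' hmm'
    apply iUnion₂_mono
    intro i _
    apply Ioc_subset_Ioc_right
    have h1 : (1 : ℝ) / (m' + 1) ≤ 1 / (m + 1) := by
      apply one_div_le_one_div_of_le
      · positivity
      · exact_mod_cast by omega
    linarith
  have hKW : Kc ⊆ ⋃ m, W m := by
    intro x hx
    obtain ⟨i, hi, hxi⟩ := by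
      simpa only [mem_iUnion, exists_prop] using ht hx
    obtain ⟨m, hm⟩ := exists_nat_one_div_lt (show (0 : ℝ) < (i.1.2 : ℝ) - x by linarith [hxi.2])
    refine mem_iUnion.mpr ⟨m, ?_⟩
    refine mem_biUnion hi ?_
    exact ⟨hxi.1, by linarith [hm]⟩
  have hWU : ∀ m, W m ⊆ U := by
    intro m
    apply iUnion₂_subset
    intro i _
    refine subset_trans ?_ i.2
    intro y hy
    constructor
    · exact hy.1
    · have : (0 : ℝ) < 1 / (m + 1) := by positivity
      linarith [hy.2]
  -- find m with c' < σ (W m)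
  have hσK : (σ : Measure ℝ) Kc ≤ ⨆ m, (σ : Measure ℝ) (W m) := by
    calc (σ : Measure ℝ) Kc ≤ (σ : Measure ℝ) (⋃ m, W m) := measure_mono hKW
      _ = ⨆ m, (σ : Measure ℝ) (W m) := Directed.measure_iUnion (hWmono.directed_le)
  obtain ⟨m, hm⟩ := lt_iSup_iff.mp (lt_of_lt_of_le hcK hσK)
  -- convergence on W m
  haveI : ∀ n, IsFiniteMeasure ((μs n : Measure ℝ)) := fun n => inferInstance
  have hconv := conv_biUnion_Ioc (σ := (σ : Measure ℝ)) (μs := fun n => (μs n : Measure ℝ)) h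
    t.card (ι := ι) (fun i => (i.1.1 : ℝ)) (fun i => (i.1.2 : ℝ) - 1 / (m + 1)) t le_rfl
  have hlt : (c' : ℝ) < ((σ : Measure ℝ) (W m)).toReal := by
    have := ENNReal.toReal_lt_toReal (by simp) (measure_ne_top (σ : Measure ℝ) (W m)) |>.mpr hm
    simpa using this
  have hev : ∀ᶠ n in atTop, (c' : ℝ) < ((μs n : Measure ℝ) (W m)).toReal :=
    hconv.eventually (lt_mem_nhds hlt)
  have hev2 : ∀ᶠ n in atTop, (c' : ℝ≥0) ≤ μs n U := by
    filter_upwards [hev] with n hn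
    have h1 : (c' : ℝ≥0∞) < (μs n : Measure ℝ) (W m) := by
      by_contra hcon
      push_neg at hcon
      have := ENNReal.toReal_mono (by simp) hcon
      simp only [ENNReal.coe_toReal] at this
      linarith
    have h2 : (c' : ℝ≥0∞) ≤ (μs n : Measure ℝ) U := le_trans h1.le (measure_mono (hWU m))
    rw [← ProbabilityMeasure.ennreal_coeFn_eq_coeFn_toMeasure] at h2
    exact_mod_cast h2
  exact le_liminf_of_le ((isBoundedUnder_of ⟨1, fun n => ProbabilityMeasure.apply_le_one _ _⟩).isCoboundedUnder_ge) hev2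


/-- **Statement 9.** Let `K ⊆ P(ℝ)` be nonempty, bounded above w.r.t. `≤st` and directed
upwards. Then the least upper bound `σ` of `K` w.r.t. `≤st` exists and there is a
`≤st`-nondecreasing sequence `(μⁿ) ⊆ K` converging weakly to `σ`. -/
theorem stmt_9 (K : Set (ProbabilityMeasure ℝ)) (hne : K.Nonempty)
    (hbdd : ∃ b, ∀ μ ∈ K, StOrd μ b)
    (hdir : ∀ μ ∈ K, ∀ ν ∈ K, ∃ κ ∈ K, StOrd μ κ ∧ StOrd ν κ) :
    ∃ σ : ProbabilityMeasure ℝ,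
      (∀ μ ∈ K, StOrd μ σ) ∧ (∀ b, (∀ μ ∈ K, StOrd μ b) → StOrd σ b) ∧
      ∃ μseq : ℕ → ProbabilityMeasure ℝ, (∀ n, μseq n ∈ K) ∧
        (∀ n, StOrd (μseq n) (μseq (n + 1))) ∧ Tendsto μseq atTop (𝓝 σ) := by
  classical
  obtain ⟨b, hb⟩ := hbdd
  obtain ⟨μ₀, hμ₀⟩ := hne
  set Gm : ℝ → ℝ≥0∞ := fun s => ⨆ μ ∈ K, (μ : Measure ℝ) (Ioi s) with hGmdef
  have hGm_le_one : ∀ s, Gm s ≤ 1 := fun s => iSup₂_le fun μ _ => prob_le_one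
  have hGm_ne_top : ∀ s, Gm s ≠ ∞ := fun s =>
    (lt_of_le_of_lt (hGm_le_one s) ENNReal.one_lt_top).ne
  have hGm_ge : ∀ μ ∈ K, ∀ s : ℝ, (μ : Measure ℝ) (Ioi s) ≤ Gm s := by
    intro μ hμ s
    simp only [hGmdef]
    exact le_biSup (fun μ : ProbabilityMeasure ℝ => (μ : Measure ℝ) (Ioi s)) hμ
  have hGm_anti : Antitone Gm := fun s t hst =>
    iSup₂_le fun μ hμ => le_trans (measure_mono (Ioi_subset_Ioi hst)) (hGm_ge μ hμ s)
  have hGm_le : ∀ (s : ℝ) (ν : ProbabilityMeasure ℝ), (∀ μ ∈ K, StOrd μ ν) →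
      Gm s ≤ (ν : Measure ℝ) (Ioi s) := fun s ν hν => iSup₂_le fun μ hμ => hν μ hμ s
  have hIoi_eq : ∀ s : ℝ, Ioi s = ⋃ n : ℕ, Ioi (s + 1 / (n + 1)) := by
    intro s; ext x; simp only [mem_Ioi, mem_iUnion]
    constructor
    · intro hx
      obtain ⟨n, hn⟩ := exists_nat_one_div_lt (sub_pos.mpr hx)
      exact ⟨n, by linarith⟩
    · rintro ⟨n, hn⟩
      have : (0 : ℝ) < 1 / (n + 1) := by positivity
      linarith
  have hmono_Ioi : ∀ s : ℝ, Monotone fun n : ℕ => Ioi (s + 1 / ((n : ℝ) + 1)) := by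
    intro s n m hnm
    apply Ioi_subset_Ioi
    have h1 : (1 : ℝ) / (m + 1) ≤ 1 / (n + 1) :=
      one_div_le_one_div_of_le (by positivity) (by exact_mod_cast by omega)
    linarith
  have hright : ∀ s : ℝ, Gm s = ⨆ t ∈ Ioi s, Gm t := by
    intro s
    apply le_antisymm
    · apply iSup₂_le; intro μ hμ
      have hμs : (μ : Measure ℝ) (Ioi s)
          = ⨆ n : ℕ, (μ : Measure ℝ) (Ioi (s + 1 / ((n : ℝ) + 1))) := by
        conv_lhs => rw [hIoi_eq s]
        exact Directed.measure_iUnion (hmono_Ioi s).directed_le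
      rw [hμs]
      apply iSup_le; intro n
      have ht : s + 1 / ((n : ℝ) + 1) ∈ Ioi s := by
        simp only [mem_Ioi]
        have : (0 : ℝ) < 1 / ((n : ℝ) + 1) := by positivity
        linarith
      exact le_trans (hGm_ge μ hμ _) (le_biSup (f := fun t : ℝ => Gm t) ht)
    · exact iSup₂_le fun t ht => hGm_anti (le_of_lt ht)
  -- the CDF
  set F : ℝ → ℝ := fun s => 1 - (Gm s).toReal with hFdef
  have hGmtoReal_le_one : ∀ s, (Gm s).toReal ≤ 1 := by
    intro s
    have := ENNReal.toReal_mono ENNReal.one_ne_top (hGm_le_one s)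
    simpa using this
  have hF0 : ∀ s, 0 ≤ F s := fun s => by
    simp only [hFdef]; linarith [hGmtoReal_le_one s]
  have hFmono : Monotone F := by
    intro s t hst
    simp only [hFdef]
    have := ENNReal.toReal_mono (hGm_ne_top s) (hGm_anti hst)
    linarith
  have hbdd_below : ∀ x : ℝ, BddBelow (F '' Ioi x) := by
    intro x
    exact ⟨0, by rintro y ⟨u, _, rfl⟩; exact hF0 u⟩
  have hFright : ∀ x, ContinuousWithinAt F (Ici x) x := by
    intro x
    rw [← continuousWithinAt_Ioi_iff_Ici]
    have htends := hFmono.tendsto_nhdsGT x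
    have heq : sInf (F '' Ioi x) = F x := by
      apply le_antisymm
      · apply le_of_forall_pos_le_add
        intro ε hε
        rcases eq_or_ne (Gm x) 0 with h0 | h0
        · have h01 : Gm (x + 1) = 0 :=
            le_antisymm (h0 ▸ hGm_anti (by linarith)) zero_le
          have hx1 : F (x + 1) = F x := by simp only [hFdef, h0, h01]
          calc sInf (F '' Ioi x) ≤ F (x + 1) :=
                csInf_le (hbdd_below x) ⟨x + 1, by simp, rfl⟩
            _ ≤ F x + ε := by rw [hx1]; linarith
        · have hlt : Gm x - ENNReal.ofReal ε < Gm x :=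
            ENNReal.sub_lt_self (hGm_ne_top x) h0 (by simp [hε])
          have hlt2 : Gm x - ENNReal.ofReal ε < ⨆ t ∈ Ioi x, Gm t :=
            lt_of_lt_of_le hlt (le_of_eq (hright x))
          obtain ⟨t, hrest⟩ := lt_iSup_iff.mp hlt2
          obtain ⟨ht, hlt3⟩ := lt_iSup_iff.mp hrest
          have hle : Gm x ≤ Gm t + ENNReal.ofReal ε := by
            rcases le_total (Gm x) (ENNReal.ofReal ε) with hc | hc
            · exact le_trans hc le_add_self
            · calc Gm x = Gm x - ENNReal.ofReal ε + ENNReal.ofReal ε :=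
                    (tsub_add_cancel_of_le hc).symm
                _ ≤ Gm t + ENNReal.ofReal ε := add_le_add_left hlt3.le _
          have hreal : (Gm x).toReal ≤ (Gm t).toReal + ε := by
            have h2 := ENNReal.toReal_mono
              (by simp [ENNReal.add_ne_top, hGm_ne_top t]) hle
            rw [ENNReal.toReal_add (hGm_ne_top t) ENNReal.ofReal_ne_top,
              ENNReal.toReal_ofReal hε.le] at h2
            exact h2
          have hFt : F t ≤ F x + ε := by simp only [hFdef]; linarith
          exact le_trans (csInf_le (hbdd_below x) ⟨t, ht, rfl⟩) hFt
      · apply le_csInf (Set.Nonempty.image F ⟨x + 1, by simp⟩)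
        rintro y ⟨t, ht, rfl⟩
        exact hFmono (le_of_lt ht)
    have : Tendsto F (𝓝[>] x) (𝓝 (F x)) := heq ▸ htends
    exact this
  set Fst : StieltjesFunction ℝ := ⟨F, hFmono, hFright⟩ with hFstdef
  -- limits at ±∞
  have hIoi_compl : ∀ (ν : Measure ℝ), IsProbabilityMeasure ν → ∀ s : ℝ,
      ν (Ioi s) = 1 - ν (Iic s) := by
    intro ν hν s
    rw [← compl_Iic, measure_compl measurableSet_Iic (measure_ne_top _ _), measure_univ]
  have hbtop : Tendsto (fun s : ℝ => (b : Measure ℝ) (Ioi s)) atTop (𝓝 0) := by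
    have h1 : Tendsto (fun s : ℝ => (b : Measure ℝ) (Iic s)) atTop
        (𝓝 ((b : Measure ℝ) univ)) := tendsto_measure_Iic_atTop _
    rw [measure_univ] at h1
    have h2 := ENNReal.Tendsto.sub (tendsto_const_nhds (x := (1 : ℝ≥0∞))) h1
      (Or.inl ENNReal.one_ne_top)
    simp only [tsub_self] at h2
    exact h2.congr fun s => (hIoi_compl (b : Measure ℝ) inferInstance s).symm
  have hGmtop : Tendsto Gm atTop (𝓝 0) :=
    tendsto_of_tendsto_of_tendsto_of_le_of_le tendsto_const_nhds hbtop
      (fun s => zero_le) (fun s => hGm_le s b hb)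
  have hFtop : Tendsto F atTop (𝓝 1) := by
    have h1 : Tendsto (fun s => (Gm s).toReal) atTop (𝓝 0) := by
      have := (ENNReal.tendsto_toReal (by simp)).comp hGmtop
      exact this
    have h2 := (tendsto_const_nhds (x := (1 : ℝ)) (f := atTop)).sub h1
    simpa using h2
  have hμ₀bot : Tendsto (fun s : ℝ => (μ₀ : Measure ℝ) (Ioi s)) atBot (𝓝 1) := by
    have h1 : Tendsto (fun s : ℝ => (μ₀ : Measure ℝ) (Ici (s + 1))) atBot
        (𝓝 ((μ₀ : Measure ℝ) univ)) :=
      (tendsto_measure_Ici_atBot _).comp (tendsto_atBot_add_const_right _ 1 tendsto_id)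
    rw [measure_univ] at h1
    apply tendsto_of_tendsto_of_tendsto_of_le_of_le h1 tendsto_const_nhds
    · intro s
      exact measure_mono fun x hx => lt_of_lt_of_le (show s < s + 1 by linarith) hx
    · intro s; exact prob_le_one
  have hGmbot : Tendsto Gm atBot (𝓝 1) :=
    tendsto_of_tendsto_of_tendsto_of_le_of_le hμ₀bot tendsto_const_nhds
      (fun s => hGm_ge μ₀ hμ₀ s) hGm_le_one
  have hFbot : Tendsto F atBot (𝓝 0) := by
    have h1 : Tendsto (fun s => (Gm s).toReal) atBot (𝓝 1) := by
      have := (ENNReal.tendsto_toReal ENNReal.one_ne_top).comp hGmbot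
      exact this
    have h2 := (tendsto_const_nhds (x := (1 : ℝ)) (f := atBot)).sub h1
    simpa using h2
  have hFstbot : Tendsto Fst atBot (𝓝 0) := hFbot
  have hFsttop : Tendsto Fst atTop (𝓝 1) := hFtop
  have hprob : IsProbabilityMeasure Fst.measure := Fst.isProbabilityMeasure hFstbot hFsttop
  haveI := hprob
  set σP : ProbabilityMeasure ℝ := ⟨Fst.measure, hprob⟩ with hσPdef
  have hσIoi : ∀ s : ℝ, Fst.measure (Ioi s) = Gm s := by
    intro s
    have hIic := Fst.measure_Iic hFstbot s
    rw [sub_zero] at hIic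
    have hFs : Fst s = F s := rfl
    rw [hFs] at hIic
    rw [hIoi_compl Fst.measure hprob s, hIic]
    have hofF : ENNReal.ofReal (F s) = 1 - ENNReal.ofReal ((Gm s).toReal) := by
      simp only [hFdef]
      rw [ENNReal.ofReal_sub _ ENNReal.toReal_nonneg, ENNReal.ofReal_one]
    rw [hofF, ENNReal.ofReal_toReal (hGm_ne_top s),
      ENNReal.sub_sub_cancel ENNReal.one_ne_top (hGm_le_one s)]
  -- choose the near-optimal elements
  set E : ℕ ≃ ℕ × ℚ := (Denumerable.eqv (ℕ × ℚ)).symm with hE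
  have hνex : ∀ (m : ℕ) (q : ℚ), ∃ ν, ν ∈ K ∧
      Gm (q : ℝ) ≤ (ν : Measure ℝ) (Ioi (q : ℝ)) + ((m : ℝ≥0∞) + 1)⁻¹ := by
    intro m q
    set ε : ℝ≥0∞ := ((m : ℝ≥0∞) + 1)⁻¹ with hεdef
    have hε0 : ε ≠ 0 := by
      simp only [hεdef, ne_eq, ENNReal.inv_eq_zero]
      exact ENNReal.add_ne_top.mpr ⟨ENNReal.natCast_ne_top m, ENNReal.one_ne_top⟩
    rcases eq_or_ne (Gm (q : ℝ)) 0 with h0 | h0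
    · exact ⟨μ₀, hμ₀, by rw [h0]; exact zero_le⟩
    · have hlt : Gm (q : ℝ) - ε < Gm (q : ℝ) :=
        ENNReal.sub_lt_self (hGm_ne_top _) h0 hε0
      have hlt2 : Gm (q : ℝ) - ε < ⨆ μ ∈ K, (μ : Measure ℝ) (Ioi (q : ℝ)) := by
        rw [hGmdef] at hlt
        exact hlt
      obtain ⟨μ, hrest⟩ := lt_iSup_iff.mp hlt2
      obtain ⟨hμK, hlt3⟩ := lt_iSup_iff.mp hrest
      refine ⟨μ, hμK, ?_⟩
      rcases le_total (Gm (q : ℝ)) ε with hc | hc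
      · exact le_trans hc le_add_self
      · calc Gm (q : ℝ) = Gm (q : ℝ) - ε + ε := (tsub_add_cancel_of_le hc).symm
          _ ≤ _ := add_le_add_left hlt3.le _
  choose νf hνK hνval using fun j : ℕ => hνex (E j).1 (E j).2
  have hstep : ∀ (x : {y : ProbabilityMeasure ℝ // y ∈ K}) (j : ℕ),
      ∃ κ : {y : ProbabilityMeasure ℝ // y ∈ K}, StOrd x.1 κ.1 ∧ StOrd (νf j) κ.1 := by
    intro x j
    obtain ⟨κ, hκ, h1, h2⟩ := hdir x.1 x.2 (νf j) (hνK j)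
    exact ⟨⟨κ, hκ⟩, h1, h2⟩
  choose step hstep1 hstep2 using hstep
  set f : ℕ → {y : ProbabilityMeasure ℝ // y ∈ K} :=
    fun n => Nat.rec ⟨μ₀, hμ₀⟩ (fun j ih => step ih j) n with hfdef
  set μseq : ℕ → ProbabilityMeasure ℝ := fun n => (f n).1 with hμseqdef
  have hseqK : ∀ n, μseq n ∈ K := fun n => (f n).2
  have hseqmono : ∀ n, StOrd (μseq n) (μseq (n + 1)) := fun n => hstep1 (f n) n
  have hseqν : ∀ j, StOrd (νf j) (μseq (j + 1)) := fun j => hstep2 (f j) j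
  have hmono' : ∀ s : ℝ, Monotone fun n => (μseq n : Measure ℝ) (Ioi s) := by
    intro s
    apply monotone_nat_of_le_succ
    intro n; exact hseqmono n s
  have hkey : ∀ s : ℝ, (⨆ n, (μseq n : Measure ℝ) (Ioi s)) = Gm s := by
    have hratl : ∀ q : ℚ, Gm (q : ℝ) ≤ ⨆ n, (μseq n : Measure ℝ) (Ioi (q : ℝ)) := by
      intro q
      apply ENNReal.le_of_forall_pos_le_add
      intro ε hε _
      obtain ⟨m, hm⟩ := ENNReal.exists_inv_nat_lt
        (show ((ε : ℝ≥0∞)) ≠ 0 by exact_mod_cast hε.ne')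
      set j := E.symm (m, q) with hj
      have hEj : E j = (m, q) := E.apply_symm_apply _
      have h1 := hνval j
      rw [hEj] at h1
      have h2 : ((m : ℝ≥0∞) + 1)⁻¹ ≤ (ε : ℝ≥0∞) := by
        refine le_trans ?_ hm.le
        exact ENNReal.inv_le_inv.mpr le_self_add
      calc Gm (q : ℝ) ≤ (νf j : Measure ℝ) (Ioi (q : ℝ)) + ((m : ℝ≥0∞) + 1)⁻¹ := h1
        _ ≤ (μseq (j + 1) : Measure ℝ) (Ioi (q : ℝ)) + (ε : ℝ≥0∞) :=
            add_le_add (hseqν j (q : ℝ)) h2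
        _ ≤ (⨆ n, (μseq n : Measure ℝ) (Ioi (q : ℝ))) + (ε : ℝ≥0∞) :=
            add_le_add_left (le_iSup (fun n => (μseq n : Measure ℝ) (Ioi (q : ℝ))) (j + 1)) _
    intro s
    apply le_antisymm
    · exact iSup_le fun n => hGm_ge _ (hseqK n) s
    · rw [hright s]
      apply iSup₂_le; intro t ht
      obtain ⟨u, hu1, hu2⟩ := exists_rat_btwn (show s < t from ht)
      calc Gm t ≤ Gm (u : ℝ) := hGm_anti hu2.le
        _ ≤ ⨆ n, (μseq n : Measure ℝ) (Ioi (u : ℝ)) := hratl u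
        _ ≤ ⨆ n, (μseq n : Measure ℝ) (Ioi s) :=
            iSup_mono fun n => measure_mono (Ioi_subset_Ioi hu1.le)
  have htIoi : ∀ s : ℝ, Tendsto (fun n => (μseq n : Measure ℝ) (Ioi s)) atTop (𝓝 (Gm s)) := by
    intro s; rw [← hkey s]; exact tendsto_atTop_iSup (hmono' s)
  have hIocconv : ∀ a b' : ℝ,
      Tendsto (fun n => ((μseq n : Measure ℝ) (Ioc a b')).toReal) atTop
        (𝓝 ((Fst.measure (Ioc a b')).toReal)) := by
    intro a b'
    rcases le_or_gt a b' with hab | hab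
    · have hIoc : ∀ ν : Measure ℝ, IsFiniteMeasure ν →
          (ν (Ioc a b')).toReal = (ν (Ioi a)).toReal - (ν (Ioi b')).toReal := by
        intro ν hν
        rw [← Ioi_diff_Ioi, measure_diff (Ioi_subset_Ioi hab) measurableSet_Ioi.nullMeasurableSet
          (measure_ne_top _ _),
          ENNReal.toReal_sub_of_le (measure_mono (Ioi_subset_Ioi hab)) (measure_ne_top _ _)]
      have h1 := (ENNReal.tendsto_toReal (hGm_ne_top a)).comp (htIoi a)
      have h2 := (ENNReal.tendsto_toReal (hGm_ne_top b')).comp (htIoi b')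
      have h3 := h1.sub h2
      have hσ : (Fst.measure (Ioc a b')).toReal = (Gm a).toReal - (Gm b').toReal := by
        rw [hIoc Fst.measure inferInstance, hσIoi, hσIoi]
      rw [hσ]
      exact h3.congr fun n => (hIoc (μseq n : Measure ℝ) inferInstance).symm
    · have he : Ioc a b' = (∅ : Set ℝ) := Ioc_eq_empty (not_lt.mpr hab.le)
      simp only [he, measure_empty, ENNReal.toReal_zero]
      exact tendsto_const_nhds
  have htendsto : Tendsto μseq atTop (𝓝 σP) := by
    apply MeasureTheory.tendsto_of_forall_isOpen_le_liminf
    intro G hG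
    exact open_le_liminf (σ := σP) (μs := μseq) hIocconv hG
  exact ⟨σP,
    fun μ hμ s => by
      rw [show (σP : Measure ℝ) (Ioi s) = Gm s from hσIoi s]; exact hGm_ge μ hμ s,
    fun ν hν s => by
      rw [show (σP : Measure ℝ) (Ioi s) = Gm s from hσIoi s]; exact hGm_le s ν hν,
    μseq, hseqK, hseqmono, htendsto⟩
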